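/- In a conic idempotent residuated lattice, for every element x, there is no element strictly between x^ℓ and x^r; that is, x^ℓ ∧ x^r and x^ℓ ∨ x^r form a covering pair whenever x^ℓ ≠ x^r. -/
import Mathlib


/-- In a conic idempotent residuated lattice there is no element strictly between
`x^ℓ` and `x^r`. -/
theorem stmt4 {A : Type*} [Lattice A] [Monoid A]
    (ld rd : A → A → A)
    (resl : ∀ x y z : A, x * y ≤ z ↔ y ≤ ld x z)
    (resr : ∀ x y z : A, x * y ≤ z ↔ x ≤ rd z y)
    (conic : ∀ a : A, a ≤ 1 ∨ 1 ≤ a)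
    (idem : ∀ x : A, x * x = x) :
    ∀ x c : A, ¬ (rd 1 x ⊓ ld x 1 < c ∧ c < rd 1 x ⊔ ld x 1) := by
  intro x c hc
  obtain ⟨h1, h2⟩ := hc
  set a := rd 1 x with ha_def
  set b := ld x 1 with hb_def
  -- monotonicity of multiplication
  have mulL : ∀ u v w : A, v ≤ w → u * v ≤ u * w := by
    intro u v w h
    exact (resl u v (u * w)).2 (le_trans h ((resl u w (u * w)).1 le_rfl))
  have mulR : ∀ u v w : A, v ≤ w → v * u ≤ w * u := by
    intro u v w h
    exact (resr v u (w * u)).2 (le_trans h ((resr w u (w * u)).1 le_rfl))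
  have hax : a * x ≤ 1 := (resr a x 1).2 le_rfl
  have hxb : x * b ≤ 1 := (resl x b 1).2 le_rfl
  -- a and b commute (both positive or both negative, so product is join/meet)
  have hjoin : ∀ p q : A, 1 ≤ p → 1 ≤ q → p * q = p ⊔ q := by
    intro p q hp hq
    refine le_antisymm ?_ (sup_le ?_ ?_)
    · calc p * q ≤ (p ⊔ q) * (p ⊔ q) :=
            le_trans (mulL p q (p ⊔ q) le_sup_right) (mulR (p ⊔ q) p (p ⊔ q) le_sup_left)
        _ = p ⊔ q := idem _
    · calc p = p * 1 := (mul_one p).symm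
        _ ≤ p * q := mulL p 1 q hq
    · calc q = 1 * q := (one_mul q).symm
        _ ≤ p * q := mulR q 1 p hp
  have hmeet : ∀ p q : A, p ≤ 1 → q ≤ 1 → p * q = p ⊓ q := by
    intro p q hp hq
    refine le_antisymm (le_inf ?_ ?_) ?_
    · calc p * q ≤ p * 1 := mulL p q 1 hq
        _ = p := mul_one p
    · calc p * q ≤ 1 * q := mulR q p 1 hp
        _ = q := one_mul q
    · calc p ⊓ q = (p ⊓ q) * (p ⊓ q) := (idem _).symm
        _ ≤ p * q :=
            le_trans (mulL (p ⊓ q) (p ⊓ q) q inf_le_right) (mulR q (p ⊓ q) p inf_le_left)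
  have hcomm : a * b = b * a := by
    rcases conic x with hx | hx
    · -- x ≤ 1, so a, b ≥ 1
      have hpa : 1 ≤ a := (resr 1 x 1).1 (by rw [one_mul]; exact hx)
      have hpb : 1 ≤ b := (resl x 1 1).1 (by rw [mul_one]; exact hx)
      rw [hjoin a b hpa hpb, hjoin b a hpb hpa, sup_comm]
    · -- 1 ≤ x, so a, b ≤ 1
      have hna : a ≤ 1 := le_trans (by calc a = a * 1 := (mul_one a).symm
        _ ≤ a * x := mulL a 1 x hx) hax
      have hnb : b ≤ 1 := le_trans (by calc b = 1 * b := (one_mul b).symm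
        _ ≤ x * b := mulR b 1 x hx) hxb
      rw [hmeet a b hna hnb, hmeet b a hnb hna, inf_comm]
  -- dichotomy 1 : c ≤ a or b ≤ c
  have hD1 : c ≤ a ∨ b ≤ c := by
    rcases conic (c * x) with h | h
    · exact Or.inl ((resr c x 1).1 h)
    · refine Or.inr ?_
      calc b = 1 * b := (one_mul b).symm
        _ ≤ (c * x) * b := mulR b 1 (c * x) h
        _ = c * (x * b) := mul_assoc c x b
        _ ≤ c * 1 := mulL c (x * b) 1 hxb
        _ = c := mul_one c
  -- dichotomy 2 : c ≤ b or a ≤ c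
  have hD2 : c ≤ b ∨ a ≤ c := by
    rcases conic (x * c) with h | h
    · exact Or.inl ((resl x c 1).1 h)
    · refine Or.inr ?_
      calc a = a * 1 := (mul_one a).symm
        _ ≤ a * (x * c) := mulL a 1 (x * c) h
        _ = (a * x) * c := (mul_assoc a x c).symm
        _ ≤ 1 * c := mulR c (a * x) 1 hax
        _ = c := one_mul c
  -- a and b must be incomparable
  have hab : ¬ a ≤ b := by
    intro h
    rcases hD1 with hca | hbc
    · exact h1.not_ge (le_inf hca (le_trans hca h))
    · exact h2.not_ge (le_trans (sup_le h le_rfl) hbc)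
  have hba : ¬ b ≤ a := by
    intro h
    rcases hD2 with hcb | hac
    · exact h1.not_ge (le_inf (le_trans hcb h) hcb)
    · exact h2.not_ge (sup_le hac (le_trans h hac))
  -- incomparability forces 1 ≤ x*a and 1 ≤ b*x
  have hxa : 1 ≤ x * a := by
    rcases conic (x * a) with h | h
    · exact absurd ((resl x a 1).1 h) hab
    · exact h
  have hbx : 1 ≤ b * x := by
    rcases conic (b * x) with h | h
    · exact absurd ((resr b x 1).1 h) hba
    · exact h
  -- final contradiction: x*a ≤ (x*a)*(b*x) = (x*b)*(a*x) ≤ 1, so a ≤ b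
  have key : x * a ≤ 1 := by
    calc x * a = (x * a) * 1 := (mul_one _).symm
      _ ≤ (x * a) * (b * x) := mulL (x * a) 1 (b * x) hbx
      _ = (x * b) * (a * x) := by
          rw [mul_assoc x a (b * x), mul_assoc x b (a * x), ← mul_assoc a b x,
            ← mul_assoc b a x, hcomm]
      _ ≤ 1 * (a * x) := mulR (a * x) (x * b) 1 hxb
      _ = a * x := one_mul _
      _ ≤ 1 := hax
  exact hab ((resl x a 1).1 key)
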